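/- arXiv:1804.05444 — 4 statements merged into one kernel-verified Lean document; each statement's English description precedes it below -/
import Mathlib

section
/- Let A be an N×N Hermitian positive definite complex matrix with smallest eigenvalue λ_min > 0 and largest eigenvalue λ_max. Then for every index n ∈ {1,…,N}, the n-th diagonal entry of A⁻¹ satisfies (A⁻¹)_{n,n} ≤ (1 / (4·A_{n,n})) · (λ_max/λ_min + λ_min/λ_max + 2), where A_{n,n} > 0 is the n-th diagonal entry of A. -/
open Matrix ComplexOrder

lemma diag_entry_re (N : ℕ) (U : Matrix (Fin N) (Fin N) ℂ) (d : Fin N → ℝ) (n : Fin N) :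
    ((U * diagonal (fun i => (d i : ℂ)) * Uᴴ) n n).re
      = ∑ i, d i * Complex.normSq (U n i) := by
  simp only [mul_apply, diagonal_apply, conjTranspose_apply, Finset.sum_mul]
  rw [Complex.re_sum]
  congr 1
  ext i
  rw [Finset.sum_eq_single i]
  · rw [if_pos rfl]
    have : U n i * (d i : ℂ) * star (U n i) = (d i : ℂ) * (U n i * star (U n i)) := by ring
    rw [this]
    simp [Complex.mul_conj]
  · intro j _ hj; rw [if_neg hj]; ring
  · intro h; simp at h

/-- For an `N × N` Hermitian positive definite complex matrix `A` with smallest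
eigenvalue `λ_min > 0` and largest eigenvalue `λ_max`, the `n`-th diagonal entry
of `A⁻¹` satisfies
`(A⁻¹)ₙₙ ≤ (1 / (4 Aₙₙ)) (λ_max/λ_min + λ_min/λ_max + 2)`. -/
theorem inv_diagonal_entry_bound (N : ℕ) (A : Matrix (Fin N) (Fin N) ℂ)
    (hA : A.PosDef) (lmin lmax : ℝ) (hlmin : 0 < lmin)
    (hmin : IsLeast (Set.range hA.isHermitian.eigenvalues) lmin)
    (hmax : IsGreatest (Set.range hA.isHermitian.eigenvalues) lmax)
    (n : Fin N) (hdiag : 0 < (A n n).re) :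
    ((A⁻¹) n n).re ≤ (1 / (4 * (A n n).re)) * (lmax / lmin + lmin / lmax + 2) := by
  set hH := hA.isHermitian with hHdef
  set U : Matrix (Fin N) (Fin N) ℂ := (hH.eigenvectorUnitary : Matrix (Fin N) (Fin N) ℂ) with hU
  set lam : Fin N → ℝ := hH.eigenvalues with hlam
  have hspec : A = U * diagonal (fun i => ((lam i : ℝ) : ℂ)) * Uᴴ := by
    exact hH.spectral_theorem
  have hlampos : ∀ i, 0 < lam i := fun i => hA.eigenvalues_pos i
  have hUU : U * Uᴴ = 1 := by
    exact (Matrix.mem_unitaryGroup_iff).mp hH.eigenvectorUnitary.2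
  have hUU' : Uᴴ * U = 1 := by
    exact (Matrix.mem_unitaryGroup_iff').mp hH.eigenvectorUnitary.2
  -- inverse formula
  have hinv : A⁻¹ = U * diagonal (fun i => ((lam i : ℝ) : ℂ)⁻¹) * Uᴴ := by
    refine inv_eq_right_inv ?_
    rw [hspec]
    have : (U * diagonal (fun i => ((lam i : ℝ) : ℂ)) * Uᴴ) *
        (U * diagonal (fun i => ((lam i : ℝ) : ℂ)⁻¹) * Uᴴ)
        = U * (diagonal (fun i => ((lam i : ℝ) : ℂ)) * (Uᴴ * U) *
            diagonal (fun i => ((lam i : ℝ) : ℂ)⁻¹)) * Uᴴ := by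
      simp only [Matrix.mul_assoc]
    rw [this, hUU', mul_one, diagonal_mul_diagonal]
    have hd : (fun i => ((lam i : ℝ) : ℂ) * ((lam i : ℝ) : ℂ)⁻¹) = fun _ => (1 : ℂ) := by
      funext i
      exact mul_inv_cancel₀ (by exact_mod_cast (hlampos i).ne')
    rw [hd, diagonal_one, mul_one, hUU]
  set w : Fin N → ℝ := fun i => Complex.normSq (U n i) with hw
  have hwnonneg : ∀ i, 0 ≤ w i := fun i => Complex.normSq_nonneg _
  have hwsum : ∑ i, w i = 1 := by
    have := congrArg (fun M => (M n n).re) hUU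
    simp only [mul_apply, conjTranspose_apply, one_apply_eq, Complex.re_sum,
      Complex.one_re] at this
    rw [← this]
    congr 1; ext i
    rw [mul_comm]
    simp [hw, Complex.mul_conj, Complex.normSq_apply]
  have ha : (A n n).re = ∑ i, lam i * w i := by
    rw [hspec]; exact diag_entry_re N U lam n
  have hinv' : ∀ i, (((lam i : ℝ) : ℂ))⁻¹ = (((lam i)⁻¹ : ℝ) : ℂ) := by
    intro i; push_cast; ring
  have hb : ((A⁻¹) n n).re = ∑ i, (lam i)⁻¹ * w i := by
    rw [hinv]
    have : (fun i => ((lam i : ℝ) : ℂ)⁻¹) = fun i => (((lam i)⁻¹ : ℝ) : ℂ) := funext hinv'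
    rw [this]
    exact diag_entry_re N U (fun i => (lam i)⁻¹) n
  set a := (A n n).re
  set b := ((A⁻¹) n n).re
  have hmle : ∀ i, lmin ≤ lam i := fun i => hmin.2 ⟨i, rfl⟩
  have hMge : ∀ i, lam i ≤ lmax := fun i => hmax.2 ⟨i, rfl⟩
  have hlmax : 0 < lmax := by
    obtain ⟨i, hi⟩ := hmax.1
    exact hi ▸ hlampos i
  -- key: b ≤ (lmin + lmax - a)/(lmin*lmax)
  have key : b * (lmin * lmax) ≤ lmin + lmax - a := by
    have hterm : ∀ i, (lam i)⁻¹ * w i ≤ ((lmin + lmax - lam i) / (lmin * lmax)) * w i := by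
      intro i
      apply mul_le_mul_of_nonneg_right _ (hwnonneg i)
      rw [inv_eq_one_div, div_le_div_iff₀ (hlampos i) (mul_pos hlmin hlmax)]
      nlinarith [mul_nonneg (sub_nonneg.2 (hmle i)) (sub_nonneg.2 (hMge i))]
    have hsum : ∑ i, (lam i)⁻¹ * w i ≤ ∑ i, ((lmin + lmax - lam i) / (lmin * lmax)) * w i :=
      Finset.sum_le_sum (fun i _ => hterm i)
    rw [← hb] at hsum
    have heq : ∑ i, ((lmin + lmax - lam i) / (lmin * lmax)) * w i
        = (lmin + lmax - a) / (lmin * lmax) := by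
      have hrw : ∀ i, ((lmin + lmax - lam i) / (lmin * lmax)) * w i
          = (lmin + lmax) / (lmin * lmax) * w i - (1 / (lmin * lmax)) * (lam i * w i) := by
        intro i; field_simp
      rw [Finset.sum_congr rfl (fun i _ => hrw i), Finset.sum_sub_distrib, ← Finset.mul_sum,
        ← Finset.mul_sum, hwsum, ← ha]
      field_simp
    rw [heq] at hsum
    calc b * (lmin * lmax) ≤ ((lmin + lmax - a) / (lmin * lmax)) * (lmin * lmax) :=
          mul_le_mul_of_nonneg_right hsum (le_of_lt (mul_pos hlmin hlmax))
      _ = lmin + lmax - a := by field_simp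
  have hrhs : (1 / (4 * a)) * (lmax / lmin + lmin / lmax + 2)
      = (lmin + lmax)^2 / (4 * a * (lmin * lmax)) := by
    field_simp; ring
  rw [hrhs, le_div_iff₀ (by positivity)]
  nlinarith [mul_le_mul_of_nonneg_left key (by linarith : (0:ℝ) ≤ 4 * a),
    sq_nonneg (lmin + lmax - 2 * a)]
end

section
/- Let G be an N×N Hermitian positive definite complex matrix with unit diagonal entries (G_{n,n} = 1 for all n), with smallest eigenvalue λ_min > 0 and largest eigenvalue λ_max, and set η = (1/4)(λ_max/λ_min + λ_min/λ_max + 2). Fix n ∈ {1,…,N} and let Q = (G⁻¹)_{n,n} > 0. Let τ > 0 be a real number (playing the role of T_BS·T_MU), let β_1, β_m be nonzero complex numbers, let m ≥ 1, and let P_1, …, P_m be real numbers with P_k ≥ 0 for k < m and P_m > 0. Define Λ² = τ |β_1|² / Q. Then log₂(1 + P_m |β_m|² |β_1|⁻² Λ² / (Σ_{k=1}^{m−1} P_k |β_m|² |β_1|⁻² Λ² + 1)) ≥ log₂(1 + P_m τ |β_m|² / (Σ_{k=1}^{m−1} P_k τ |β_m|² + η)). -/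
open Matrix ComplexOrder

/-- Diagonal entry of `U * diagonal (d : ℝ) * Uᴴ` as a real weighted sum. -/
lemma entry_re_aux {N : ℕ} (U : Matrix (Fin N) (Fin N) ℂ) (d : Fin N → ℝ) (n : Fin N) :
    ((U * Matrix.diagonal (fun j => (d j : ℂ)) * star U) n n).re
      = ∑ j, Complex.normSq (U n j) * d j := by
  rw [Matrix.mul_apply]
  simp only [Matrix.mul_diagonal, Matrix.star_apply]
  rw [Complex.re_sum]
  apply Finset.sum_congr rfl
  intro j _
  have h1 : U n j * (d j : ℂ) * star (U n j)
      = (d j : ℂ) * ((Complex.normSq (U n j) : ℝ) : ℂ) := by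
    rw [mul_comm (U n j) ((d j : ℂ)), mul_assoc, Complex.star_def, Complex.mul_conj]
  rw [h1, ← Complex.ofReal_mul, Complex.ofReal_re, mul_comm]

lemma inv_spectral {N : ℕ} (G : Matrix (Fin N) (Fin N) ℂ) (hG : G.PosDef) :
    G⁻¹ = (hG.isHermitian.eigenvectorUnitary : Matrix (Fin N) (Fin N) ℂ) *
      diagonal (fun j => ((hG.isHermitian.eigenvalues j : ℂ))⁻¹) *
      star (hG.isHermitian.eigenvectorUnitary : Matrix (Fin N) (Fin N) ℂ) := by
  set U := (hG.isHermitian.eigenvectorUnitary : Matrix (Fin N) (Fin N) ℂ)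
  have hU : U * star U = 1 := Matrix.mem_unitaryGroup_iff.mp hG.isHermitian.eigenvectorUnitary.2
  have hU' : star U * U = 1 := Matrix.mem_unitaryGroup_iff'.mp hG.isHermitian.eigenvectorUnitary.2
  apply Matrix.inv_eq_right_inv
  have hdd : (diagonal (RCLike.ofReal ∘ hG.isHermitian.eigenvalues) :
      Matrix (Fin N) (Fin N) ℂ) * diagonal (fun j => ((hG.isHermitian.eigenvalues j : ℂ))⁻¹)
      = 1 := by
    rw [Matrix.diagonal_mul_diagonal, ← Matrix.diagonal_one]
    refine congrArg Matrix.diagonal (funext fun j => ?_)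
    have hne : ((hG.isHermitian.eigenvalues j : ℂ)) ≠ 0 :=
      Complex.ofReal_ne_zero.mpr (hG.eigenvalues_pos j).ne'
    exact mul_inv_cancel₀ hne
  have hmain : (U * diagonal (RCLike.ofReal ∘ hG.isHermitian.eigenvalues) * star U) *
        (U * diagonal (fun j => ((hG.isHermitian.eigenvalues j : ℂ))⁻¹) * star U) = 1 := by
    have step : (U * diagonal (RCLike.ofReal ∘ hG.isHermitian.eigenvalues) * star U) *
        (U * diagonal (fun j => ((hG.isHermitian.eigenvalues j : ℂ))⁻¹) * star U)
        = U * (diagonal (RCLike.ofReal ∘ hG.isHermitian.eigenvalues) *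
          diagonal (fun j => ((hG.isHermitian.eigenvalues j : ℂ))⁻¹)) * star U := by
      simp only [Matrix.mul_assoc]
      rw [← Matrix.mul_assoc (star U) U, hU', Matrix.one_mul]
    rw [step, hdd, Matrix.mul_one, hU]
  have hs := hG.isHermitian.spectral_theorem
  rw [Unitary.conjStarAlgAut_apply] at hs
  rw [← hs] at hmain
  exact hmain

/-- Theorem 1 of the paper (perfect correlation): with `G = F_RF* F_RF`
Hermitian positive definite with unit diagonal, `Q = (G⁻¹)_{n,n}`,
`η = (1/4)(λ_max/λ_min + λ_min/λ_max + 2)` and `Λ² = τ |β₁|² / Q`, the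
achievable rate of the `m`-th user is lower bounded:
`log₂(1 + P_m |β_m|²|β₁|⁻²Λ² / (Σ_{k<m} P_k |β_m|²|β₁|⁻²Λ² + 1))
  ≥ log₂(1 + P_m τ |β_m|² / (Σ_{k<m} P_k τ |β_m|² + η))`. -/
theorem rate_lower_bound_perfect_correlation (N : ℕ)
    (G : Matrix (Fin N) (Fin N) ℂ) (hG : G.PosDef)
    (hdiag : ∀ k, G k k = 1)
    (lmin lmax : ℝ) (hlmin : 0 < lmin)
    (hmin : IsLeast (Set.range hG.isHermitian.eigenvalues) lmin)
    (hmax : IsGreatest (Set.range hG.isHermitian.eigenvalues) lmax)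
    (η : ℝ) (hη : η = (1 / 4) * (lmax / lmin + lmin / lmax + 2))
    (n : Fin N) (Q : ℝ) (hQdef : Q = ((G⁻¹) n n).re) (hQpos : 0 < Q)
    (τ : ℝ) (hτ : 0 < τ) (β1 βm : ℂ) (hβ1 : β1 ≠ 0) (hβm : βm ≠ 0)
    (m : ℕ) (hm : 1 ≤ m) (P : ℕ → ℝ)
    (hPk : ∀ k, 1 ≤ k → k < m → 0 ≤ P k) (hPm : 0 < P m)
    (Λsq : ℝ) (hΛ : Λsq = τ * ‖β1‖ ^ 2 / Q) :
    Real.logb 2 (1 + P m * ‖βm‖ ^ 2 / ‖β1‖ ^ 2 * Λsq /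
        ((∑ k ∈ Finset.Ico 1 m, P k * ‖βm‖ ^ 2 / ‖β1‖ ^ 2 * Λsq) + 1))
      ≥ Real.logb 2 (1 + P m * τ * ‖βm‖ ^ 2 /
        ((∑ k ∈ Finset.Ico 1 m, P k * τ * ‖βm‖ ^ 2) + η)) := by
  set U := (hG.isHermitian.eigenvectorUnitary : Matrix (Fin N) (Fin N) ℂ) with hUdef
  set lam := hG.isHermitian.eigenvalues with hlamdef
  set w : Fin N → ℝ := fun j => Complex.normSq (U n j) with hwdef
  have hwpos : ∀ j, 0 ≤ w j := fun j => Complex.normSq_nonneg _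
  have hlampos : ∀ j, 0 < lam j := hG.eigenvalues_pos
  have hbound : ∀ j, lmin ≤ lam j ∧ lam j ≤ lmax := fun j =>
    ⟨hmin.2 ⟨j, rfl⟩, hmax.2 ⟨j, rfl⟩⟩
  have hU : U * star U = 1 := Matrix.mem_unitaryGroup_iff.mp hG.isHermitian.eigenvectorUnitary.2
  -- Σ w = 1
  have hsum1 : ∑ j, w j = 1 := by
    have := congrFun (congrFun hU n) n
    rw [Matrix.mul_apply, Matrix.one_apply_eq] at this
    have h2 := congrArg Complex.re this
    simpa [Matrix.star_apply, Complex.mul_conj, Complex.re_sum, w] using h2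
  -- Σ w λ = 1
  have hsumlam : ∑ j, w j * lam j = 1 := by
    have hGnn : G n n = 1 := hdiag n
    rw [hG.isHermitian.spectral_theorem] at hGnn
    have h2 := congrArg Complex.re hGnn
    have hcast : (Matrix.diagonal (RCLike.ofReal ∘ lam) : Matrix (Fin N) (Fin N) ℂ)
        = Matrix.diagonal (fun j => ((lam j : ℝ) : ℂ)) := rfl
    rw [Unitary.conjStarAlgAut_apply, ← hUdef, ← hlamdef, hcast, entry_re_aux U lam n] at h2
    simpa using h2
  -- Q = Σ w / λ
  have hQ : Q = ∑ j, w j / lam j := by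
    rw [hQdef, inv_spectral G hG]
    have hcast : (Matrix.diagonal (fun j => ((lam j : ℂ))⁻¹) : Matrix (Fin N) (Fin N) ℂ)
        = Matrix.diagonal (fun j => (((lam j)⁻¹ : ℝ) : ℂ)) := by
      congr 1; funext j; push_cast; rfl
    rw [← hUdef, ← hlamdef, hcast, entry_re_aux U (fun j => (lam j)⁻¹) n]
    apply Finset.sum_congr rfl
    intro j _
    rw [div_eq_mul_inv]
  have hlmax : 0 < lmax := by
    rcases hmin.1 with ⟨j, _⟩
    exact lt_of_lt_of_le hlmin (le_trans (hbound j).1 (hbound j).2)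
  -- Kantorovich: Q ≤ η
  have hQη : Q ≤ η := by
    have step1 : Q ≤ ∑ j, w j * ((lmin + lmax - lam j) / (lmin * lmax)) := by
      rw [hQ]
      apply Finset.sum_le_sum
      intro j _
      rw [div_eq_mul_inv]
      apply mul_le_mul_of_nonneg_left _ (hwpos j)
      rw [inv_le_iff_one_le_mul₀ (hlampos j), div_mul_eq_mul_div,
        le_div_iff₀ (by positivity)]
      nlinarith [(hbound j).1, (hbound j).2, hlampos j]
    have step2 : ∑ j, w j * ((lmin + lmax - lam j) / (lmin * lmax))
        = (lmin + lmax - 1) / (lmin * lmax) := by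
      have he : ∀ j ∈ Finset.univ, w j * ((lmin + lmax - lam j) / (lmin * lmax))
          = (w j * (lmin + lmax) - w j * lam j) / (lmin * lmax) := by
        intro j _; ring
      rw [Finset.sum_congr rfl he, ← Finset.sum_div, Finset.sum_sub_distrib,
        ← Finset.sum_mul, hsum1, hsumlam, one_mul]
    have step3 : (lmin + lmax - 1) / (lmin * lmax) ≤ η := by
      rw [hη, div_le_iff₀ (by positivity)]
      have : (1 / 4) * (lmax / lmin + lmin / lmax + 2) * (lmin * lmax)
          = (1/4) * (lmax^2 + lmin^2 + 2 * lmin * lmax) := by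
        field_simp
      rw [this]
      nlinarith [sq_nonneg (lmin + lmax - 2)]
    linarith [step1, step2.le, step3]
  -- final algebra
  have hb1 : (0:ℝ) < ‖β1‖ ^ 2 := by
    have := norm_pos_iff.mpr hβ1; positivity
  have hbm : (0:ℝ) < ‖βm‖ ^ 2 := by
    have := norm_pos_iff.mpr hβm; positivity
  set X : ℝ := τ * ‖βm‖ ^ 2 with hXdef
  have hX : 0 < X := by positivity
  set S : ℝ := ∑ k ∈ Finset.Ico 1 m, P k with hSdef
  have hS : 0 ≤ S := Finset.sum_nonneg fun k hk => by
    rw [Finset.mem_Ico] at hk; exact hPk k hk.1 hk.2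
  have hηpos : 0 < η := lt_of_lt_of_le hQpos hQη
  have hLrw : P m * ‖βm‖ ^ 2 / ‖β1‖ ^ 2 * Λsq = P m * X / Q := by
    rw [hΛ, hXdef]; field_simp
  have hLsum : (∑ k ∈ Finset.Ico 1 m, P k * ‖βm‖ ^ 2 / ‖β1‖ ^ 2 * Λsq)
      = S * X / Q := by
    have he : ∀ k ∈ Finset.Ico 1 m,
        P k * ‖βm‖ ^ 2 / ‖β1‖ ^ 2 * Λsq = P k * X / Q := by
      intro k _
      rw [hΛ, hXdef]; field_simp
    rw [Finset.sum_congr rfl he]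
    rw [hSdef, ← Finset.sum_div, ← Finset.sum_mul]
  have hRsum : (∑ k ∈ Finset.Ico 1 m, P k * τ * ‖βm‖ ^ 2) = S * X := by
    rw [hSdef, Finset.sum_mul]
    apply Finset.sum_congr rfl
    intro k _; rw [hXdef]; ring
  have hRnum : P m * τ * ‖βm‖ ^ 2 = P m * X := by rw [hXdef]; ring
  rw [hLrw, hLsum, hRsum, hRnum]
  have hden : (0:ℝ) < S * X + Q := by positivity
  have hL : P m * X / Q / (S * X / Q + 1) = P m * X / (S * X + Q) := by
    rw [div_add_one hQpos.ne', div_div_div_cancel_right₀ hQpos.ne']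
  rw [hL]
  have key : 1 + P m * X / (S * X + η) ≤ 1 + P m * X / (S * X + Q) := by
    have h1 : (0:ℝ) ≤ P m * X := by positivity
    have h2 : (0:ℝ) < S * X + Q := by positivity
    exact add_le_add_right (div_le_div_of_nonneg_left h1 h2 (by linarith : S * X + Q ≤ S * X + η)) 1
  exact Real.logb_le_logb_of_le one_lt_two (by positivity) key
end

section
/- Let N ≥ 1, fix n ∈ {1,…,N}, and let v, w ∈ ℂ^N be unit vectors with v* w = 0. Let ρ ∈ ℝ with 0 ≤ ρ ≤ 1, let c be a nonzero complex number, and set g = ρ v + √(1 − ρ²) w. Let f¹, …, f^N ∈ ℂ^N be vectors satisfying: v* f^ℓ = 0 for all ℓ ≠ n, |v* f^n| = 1, and w* f^n = 0. Let m ≥ 1 and let P_{n,1}, …, P_{n,m} ≥ 0 with P_{n,m} > 0; let P_c ≥ 0 and, for each ℓ ≠ n, let P_{ℓ,1}, …, P_{ℓ,M} ≥ 0 with Σ_{q=1}^{M} P_{ℓ,q} = P_c. Let B ∈ ℂ^{N×(N−1)} be the matrix whose columns are the f^ℓ for ℓ ≠ n, and let λ_max denote the largest eigenvalue of B B*. Then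 log₂(1 + P_{n,m} |c|² |g* f^n|² / (Σ_{k=1}^{m−1} P_{n,k} |c|² |g* f^n|² + Σ_{ℓ≠n} Σ_{q=1}^{M} P_{ℓ,q} |c|² |g* f^ℓ|² + 1)) ≥ log₂(1 + P_{n,m} ρ² |c|² / (Σ_{k=1}^{m−1} P_{n,k} ρ² |c|² + P_c (1 − ρ²) |c|² λ_max + 1)). -/
open Matrix

/-- Rayleigh-type bound: the sum of squared moduli of `wᴴ` against the columns of `B`
is bounded by the largest eigenvalue of `B Bᴴ` when `w` is a unit vector. -/
lemma rayleigh_aux {n m : Type*} [Fintype n] [Fintype m] [DecidableEq n]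
    (B : Matrix n m ℂ) (w : n → ℂ) (hw : ∑ i, ‖w i‖ ^ 2 = 1)
    (lammax : ℝ)
    (hlam : IsGreatest
      (Set.range (Matrix.isHermitian_mul_conjTranspose_self B).eigenvalues) lammax) :
    ∑ ℓ, ‖star w ⬝ᵥ (fun i => B i ℓ)‖ ^ 2 ≤ lammax := by
  classical
  set hA := Matrix.isHermitian_mul_conjTranspose_self B with hhA
  set U : Matrix n n ℂ := (hA.eigenvectorUnitary : Matrix n n ℂ) with hUdef
  set y : n → ℂ := star U *ᵥ w with hy
  have hsy : star y = star w ᵥ* U := by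
    rw [hy, star_mulVec, star_eq_conjTranspose, conjTranspose_conjTranspose]
  have hUU : U * star U = 1 := (Matrix.mem_unitaryGroup_iff).mp hA.eigenvectorUnitary.2
  have hconj : ∀ z : ℂ, star z * z = (Complex.normSq z : ℂ) := fun z => by
    rw [Complex.star_def, ← Complex.normSq_eq_conj_mul_self]
  have hconj' : ∀ z : ℂ, z * star z = (Complex.normSq z : ℂ) := fun z => by
    rw [mul_comm]; exact hconj z
  -- step 1 : quadratic form equals the sum of squares
  have h1 : ((∑ ℓ, ‖star w ⬝ᵥ (fun i => B i ℓ)‖ ^ 2 : ℝ) : ℂ)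
      = star w ⬝ᵥ ((B * Bᴴ) *ᵥ w) := by
    rw [← mulVec_mulVec, dotProduct_mulVec]
    have hzl : ∀ ℓ, (Bᴴ *ᵥ w) ℓ = starRingEnd ℂ (star w ⬝ᵥ (fun i => B i ℓ)) := by
      intro ℓ
      simp [mulVec, dotProduct, conjTranspose_apply, map_sum, mul_comm]
    have hvl : ∀ ℓ, (star w ᵥ* B) ℓ = star w ⬝ᵥ (fun i => B i ℓ) := by
      intro ℓ; simp [vecMul, dotProduct]
    simp only [dotProduct, hzl, hvl, Complex.mul_conj]
    push_cast [Complex.sq_norm]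
    rfl
  -- step 2 : quadratic form via spectral theorem
  have h2 : star w ⬝ᵥ ((B * Bᴴ) *ᵥ w)
      = ∑ i, (hA.eigenvalues i : ℂ) * (Complex.normSq (y i) : ℂ) := by
    conv_lhs => rw [hA.spectral_theorem, Unitary.conjStarAlgAut_apply]
    rw [← hUdef, ← mulVec_mulVec, ← mulVec_mulVec, ← hy, dotProduct_mulVec, ← hsy]
    simp only [dotProduct, mulVec_diagonal, Function.comp_apply, Pi.star_apply]
    refine Finset.sum_congr rfl fun i _ => ?_
    rw [mul_comm, mul_assoc, hconj']
    rfl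
  -- step 3 : y has unit norm
  have h3 : ∑ i, Complex.normSq (y i) = 1 := by
    have : ((∑ i, Complex.normSq (y i) : ℝ) : ℂ) = star y ⬝ᵥ y := by
      simp only [dotProduct, Pi.star_apply, hconj]
      push_cast; rfl
    rw [hsy, hy, ← dotProduct_mulVec, mulVec_mulVec, hUU, one_mulVec] at this
    have hw' : ((1 : ℝ) : ℂ) = star w ⬝ᵥ w := by
      rw [← hw]
      simp only [dotProduct, Pi.star_apply, hconj, ← Complex.sq_norm]
      push_cast; rfl
    exact_mod_cast this.trans hw'.symm
  have hmain : ∑ ℓ, ‖star w ⬝ᵥ (fun i => B i ℓ)‖ ^ 2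
      = ∑ i, hA.eigenvalues i * Complex.normSq (y i) := by
    have := h1.trans h2
    push_cast at this
    exact_mod_cast this
  rw [hmain]
  calc ∑ i, hA.eigenvalues i * Complex.normSq (y i)
      ≤ ∑ i, lammax * Complex.normSq (y i) := by
        refine Finset.sum_le_sum fun i _ => ?_
        exact mul_le_mul_of_nonneg_right (hlam.2 ⟨i, rfl⟩) (Complex.normSq_nonneg _)
    _ = lammax := by rw [← Finset.mul_sum, h3, mul_one]

/-- Core inequality of Theorem 2 of the paper (imperfect correlation): the
achievable rate (after SIC) of user `(n,m)`, whose normalized effective channel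
is `g = ρ v + √(1 − ρ²) w` with `c g*` the effective channel, is lower bounded
using `|g* fⁿ|² = ρ²`, `|g* fˡ|² = (1 − ρ²)|w* fˡ|²` for `ℓ ≠ n`, and
`Σ_{ℓ≠n} |w* fˡ|² ≤ λ_max(B B*)`. -/
theorem rate_lower_bound_imperfect_correlation (N M : ℕ) (n : Fin N)
    (v w : Fin N → ℂ)
    (hv : ∑ i, ‖v i‖ ^ 2 = 1) (hw : ∑ i, ‖w i‖ ^ 2 = 1)
    (hvw : star v ⬝ᵥ w = 0)
    (ρ : ℝ) (hρ0 : 0 ≤ ρ) (hρ1 : ρ ≤ 1) (c : ℂ) (hc : c ≠ 0)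
    (g : Fin N → ℂ) (hg : g = (ρ : ℂ) • v + ((Real.sqrt (1 - ρ ^ 2) : ℝ) : ℂ) • w)
    (f : Fin N → Fin N → ℂ)
    (hfv : ∀ ℓ, ℓ ≠ n → star v ⬝ᵥ f ℓ = 0)
    (hfn : ‖star v ⬝ᵥ f n‖ = 1)
    (hwfn : star w ⬝ᵥ f n = 0)
    (m : ℕ) (hm : 1 ≤ m) (P : Fin N → ℕ → ℝ)
    (hPn : ∀ k ∈ Finset.Icc 1 m, 0 ≤ P n k) (hPm : 0 < P n m)
    (Pc : ℝ) (hPc : 0 ≤ Pc)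
    (hPq : ∀ ℓ, ℓ ≠ n → ∀ q ∈ Finset.Icc 1 M, 0 ≤ P ℓ q)
    (hPsum : ∀ ℓ, ℓ ≠ n → ∑ q ∈ Finset.Icc 1 M, P ℓ q = Pc)
    (B : Matrix (Fin N) {ℓ : Fin N // ℓ ≠ n} ℂ)
    (hB : ∀ (ℓ : {ℓ : Fin N // ℓ ≠ n}) (i : Fin N), B i ℓ = f ℓ.1 i)
    (lammax : ℝ)
    (hlam : IsGreatest
      (Set.range (Matrix.isHermitian_mul_conjTranspose_self B).eigenvalues) lammax) :
    Real.logb 2 (1 + P n m * ‖c‖ ^ 2 * ‖star g ⬝ᵥ f n‖ ^ 2 /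
        ((∑ k ∈ Finset.Ico 1 m, P n k * ‖c‖ ^ 2 * ‖star g ⬝ᵥ f n‖ ^ 2)
          + (∑ ℓ ∈ Finset.univ.erase n, ∑ q ∈ Finset.Icc 1 M,
              P ℓ q * ‖c‖ ^ 2 * ‖star g ⬝ᵥ f ℓ‖ ^ 2) + 1))
      ≥ Real.logb 2 (1 + P n m * ρ ^ 2 * ‖c‖ ^ 2 /
        ((∑ k ∈ Finset.Ico 1 m, P n k * ρ ^ 2 * ‖c‖ ^ 2)
          + Pc * (1 - ρ ^ 2) * ‖c‖ ^ 2 * lammax + 1)) := by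
  classical
  have h1ρ : (0:ℝ) ≤ 1 - ρ ^ 2 := by nlinarith
  have hssq : Real.sqrt (1 - ρ ^ 2) ^ 2 = 1 - ρ ^ 2 := Real.sq_sqrt h1ρ
  -- decomposition of the effective channel
  have hsplit : ∀ x : Fin N → ℂ, star g ⬝ᵥ x
      = (ρ : ℂ) * (star v ⬝ᵥ x) + ((Real.sqrt (1 - ρ ^ 2) : ℝ) : ℂ) * (star w ⬝ᵥ x) := by
    intro x
    simp only [hg, dotProduct, Pi.star_apply, Pi.add_apply, Pi.smul_apply, smul_eq_mul,
      star_add, star_mul', Complex.star_def, Complex.conj_ofReal, Finset.mul_sum,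
      ← Finset.sum_add_distrib]
    exact Finset.sum_congr rfl fun i _ => by ring
  have habs_n : ‖star g ⬝ᵥ f n‖ ^ 2 = ρ ^ 2 := by
    rw [hsplit, hwfn, mul_zero, add_zero, norm_mul, Complex.norm_real, Real.norm_of_nonneg hρ0,
      hfn, mul_one]
  have habs_l : ∀ ℓ, ℓ ≠ n → ‖star g ⬝ᵥ f ℓ‖ ^ 2
      = (1 - ρ ^ 2) * ‖star w ⬝ᵥ f ℓ‖ ^ 2 := by
    intro ℓ hℓ
    rw [hsplit, hfv ℓ hℓ, mul_zero, zero_add, norm_mul, mul_pow, Complex.norm_real,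
      Real.norm_eq_abs, sq_abs, hssq]
  -- Rayleigh bound
  have hray : ∑ ℓ ∈ Finset.univ.erase n, ‖star w ⬝ᵥ f ℓ‖ ^ 2 ≤ lammax := by
    have h := rayleigh_aux B w hw lammax hlam
    have he : ∑ ℓ ∈ Finset.univ.erase n, ‖star w ⬝ᵥ f ℓ‖ ^ 2
        = ∑ ℓ : {ℓ : Fin N // ℓ ≠ n}, ‖star w ⬝ᵥ (fun i => B i ℓ)‖ ^ 2 := by
      rw [Finset.sum_subtype (p := fun ℓ => ℓ ≠ n) (Finset.univ.erase n)
        (fun x => by simp [Finset.mem_erase]) (fun ℓ => ‖star w ⬝ᵥ f ℓ‖ ^ 2)]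
      refine Finset.sum_congr rfl fun ℓ _ => ?_
      congr 1
      refine congrArg _ (congrArg _ ?_)
      funext i
      exact (hB ℓ i).symm
    rw [he]; exact h
  have hlam0 : 0 ≤ lammax :=
    le_trans (Finset.sum_nonneg fun ℓ _ => by positivity) hray
  -- interference bound
  set T : ℝ := Pc * (1 - ρ ^ 2) * ‖c‖ ^ 2 * lammax with hT
  have hI_eq : (∑ ℓ ∈ Finset.univ.erase n, ∑ q ∈ Finset.Icc 1 M,
        P ℓ q * ‖c‖ ^ 2 * ‖star g ⬝ᵥ f ℓ‖ ^ 2)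
      = Pc * (1 - ρ ^ 2) * ‖c‖ ^ 2 *
          ∑ ℓ ∈ Finset.univ.erase n, ‖star w ⬝ᵥ f ℓ‖ ^ 2 := by
    rw [Finset.mul_sum]
    refine Finset.sum_congr rfl fun ℓ hℓ => ?_
    have hℓn : ℓ ≠ n := (Finset.mem_erase.mp hℓ).1
    have : ∀ q, P ℓ q * ‖c‖ ^ 2 * ‖star g ⬝ᵥ f ℓ‖ ^ 2
        = P ℓ q * (‖c‖ ^ 2 * ((1 - ρ ^ 2) * ‖star w ⬝ᵥ f ℓ‖ ^ 2)) := by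
      intro q; rw [habs_l ℓ hℓn]; ring
    simp only [this]
    rw [← Finset.sum_mul, hPsum ℓ hℓn]; ring
  have hI_le : (∑ ℓ ∈ Finset.univ.erase n, ∑ q ∈ Finset.Icc 1 M,
        P ℓ q * ‖c‖ ^ 2 * ‖star g ⬝ᵥ f ℓ‖ ^ 2) ≤ T := by
    rw [hI_eq, hT]
    exact mul_le_mul_of_nonneg_left hray (by positivity)
  have hI_nonneg : 0 ≤ (∑ ℓ ∈ Finset.univ.erase n, ∑ q ∈ Finset.Icc 1 M,
        P ℓ q * ‖c‖ ^ 2 * ‖star g ⬝ᵥ f ℓ‖ ^ 2) := by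
    refine Finset.sum_nonneg fun ℓ hℓ => Finset.sum_nonneg fun q hq => ?_
    have := hPq ℓ (Finset.mem_erase.mp hℓ).1 q hq
    positivity
  -- numerator and intra-cluster sums
  have hnum : P n m * ‖c‖ ^ 2 * ‖star g ⬝ᵥ f n‖ ^ 2
      = P n m * ρ ^ 2 * ‖c‖ ^ 2 := by rw [habs_n]; ring
  have hintra : (∑ k ∈ Finset.Ico 1 m, P n k * ‖c‖ ^ 2
        * ‖star g ⬝ᵥ f n‖ ^ 2)
      = ∑ k ∈ Finset.Ico 1 m, P n k * ρ ^ 2 * ‖c‖ ^ 2 := by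
    refine Finset.sum_congr rfl fun k _ => ?_
    rw [habs_n]; ring
  set S : ℝ := ∑ k ∈ Finset.Ico 1 m, P n k * ρ ^ 2 * ‖c‖ ^ 2 with hS
  have hS0 : 0 ≤ S := by
    refine Finset.sum_nonneg fun k hk => ?_
    have hk' : k ∈ Finset.Icc 1 m := by
      rw [Finset.mem_Icc]; rw [Finset.mem_Ico] at hk; exact ⟨hk.1, hk.2.le⟩
    have := hPn k hk'
    positivity
  set a : ℝ := P n m * ρ ^ 2 * ‖c‖ ^ 2 with ha
  have ha0 : 0 ≤ a := by positivity
  have hT0 : 0 ≤ T := by rw [hT]; positivity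
  rw [ge_iff_le, hnum, hintra]
  have hDL : (0:ℝ) < S + (∑ ℓ ∈ Finset.univ.erase n, ∑ q ∈ Finset.Icc 1 M,
        P ℓ q * ‖c‖ ^ 2 * ‖star g ⬝ᵥ f ℓ‖ ^ 2) + 1 := by linarith
  have hDR : (0:ℝ) < S + T + 1 := by linarith
  have hdiv : a / (S + T + 1) ≤ a / (S + (∑ ℓ ∈ Finset.univ.erase n, ∑ q ∈ Finset.Icc 1 M,
        P ℓ q * ‖c‖ ^ 2 * ‖star g ⬝ᵥ f ℓ‖ ^ 2) + 1) := by
    apply div_le_div_of_nonneg_left ha0 hDL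
    linarith
  have hx : (0:ℝ) < 1 + a / (S + T + 1) := by positivity
  exact Real.logb_le_logb_of_le (by norm_num) hx (by linarith)
end

section
/- Let T > 0 and N ≥ 1 be given, let F ∈ ℂ^{T_B×N} have full column rank with Gram matrix G = F* F (so G is Hermitian positive definite), let τ > 0 be a real number, let D = diag(β_1, …, β_N) with every β_n ≠ 0, and set H̄ = √τ · D · G. Let Λ be the diagonal matrix with Λ_{n,n} = √(τ |β_n|² / (G⁻¹)_{n,n}) and define F_BB = H̄* (H̄ H̄*)⁻¹ Λ with columns f¹, …, f^N. Then for every n, ‖F f^n‖² = 1, and consequently ‖F F_BB‖_F² = N. -/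
open Matrix ComplexOrder

/-- Power normalization of the hybrid precoder: with `G = F* F` positive
definite, `H̄ = √τ D G`, `Λ_{n,n} = √(τ |β_n|² / (G⁻¹)_{n,n})` and
`F_BB = H̄* (H̄ H̄*)⁻¹ Λ`, every effective column has unit power,
`‖F fⁿ‖² = 1`, and hence `‖F F_BB‖_F² = N`. -/
theorem hybrid_precoder_power_constraint (TB N : ℕ) (hTB : 0 < TB) (hN : 1 ≤ N)
    (F : Matrix (Fin TB) (Fin N) ℂ) (hrank : F.rank = N)
    (G : Matrix (Fin N) (Fin N) ℂ) (hGdef : G = Fᴴ * F) (hG : G.PosDef)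
    (τ : ℝ) (hτ : 0 < τ) (β : Fin N → ℂ) (hβ : ∀ k, β k ≠ 0)
    (Hbar : Matrix (Fin N) (Fin N) ℂ)
    (hHbar : Hbar = ((Real.sqrt τ : ℝ) : ℂ) • (Matrix.diagonal β * G))
    (Λ : Matrix (Fin N) (Fin N) ℂ)
    (hΛ : Λ = Matrix.diagonal fun k =>
      ((Real.sqrt (τ * ‖β k‖ ^ 2 / ((G⁻¹) k k).re) : ℝ) : ℂ))
    (FBB : Matrix (Fin N) (Fin N) ℂ)
    (hFBB : FBB = Hbarᴴ * (Hbar * Hbarᴴ)⁻¹ * Λ) :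
    (∀ k : Fin N, ∑ t, ‖(F * FBB) t k‖ ^ 2 = 1) ∧
      ∑ t, ∑ k, ‖(F * FBB) t k‖ ^ 2 = (N : ℝ) := by
  classical
  set c : ℂ := ((Real.sqrt τ : ℝ) : ℂ) with hc
  have hcc : c * c = (τ : ℂ) := by
    rw [hc, ← Complex.ofReal_mul, Real.mul_self_sqrt hτ.le]
  have hcne : c ≠ 0 := by
    rw [hc, Ne, Complex.ofReal_eq_zero]
    exact (Real.sqrt_pos.mpr hτ).ne'
  have hGH : Gᴴ = G := hG.1
  have hdG : IsUnit G.det := (Matrix.isUnit_iff_isUnit_det G).mp hG.isUnit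
  have hGinv : G * G⁻¹ = 1 := mul_nonsing_inv G hdG
  have hGinv' : G⁻¹ * G = 1 := nonsing_inv_mul G hdG
  have hGiH : G⁻¹ᴴ = G⁻¹ := by rw [conjTranspose_nonsing_inv, hGH]
  set D : Matrix (Fin N) (Fin N) ℂ := Matrix.diagonal β with hD
  set Dinv : Matrix (Fin N) (Fin N) ℂ := Matrix.diagonal (fun k => (β k)⁻¹) with hDinv
  have hDD : D * Dinv = 1 := by
    rw [hD, hDinv, diagonal_mul_diagonal]
    convert Matrix.diagonal_one
    simp [mul_inv_cancel₀ (hβ _)]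
  have hDD' : Dinv * D = 1 := by
    rw [hD, hDinv, diagonal_mul_diagonal]
    convert Matrix.diagonal_one
    simp [inv_mul_cancel₀ (hβ _)]
  set Y : Matrix (Fin N) (Fin N) ℂ := c⁻¹ • (G⁻¹ * Dinv) with hY
  have hHY : Hbar * Y = 1 := by
    rw [hHbar, hY, Matrix.smul_mul, Matrix.mul_smul, smul_smul,
      mul_inv_cancel₀ hcne, one_smul]
    calc D * G * (G⁻¹ * Dinv) = D * (G * G⁻¹) * Dinv := by
          simp only [Matrix.mul_assoc]
      _ = 1 := by rw [hGinv, Matrix.mul_one, hDD]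
  have hYH : Y * Hbar = 1 := by
    rw [hHbar, hY, Matrix.smul_mul, Matrix.mul_smul, smul_smul,
      inv_mul_cancel₀ hcne, one_smul]
    calc G⁻¹ * Dinv * (D * G) = G⁻¹ * (Dinv * D) * G := by
          simp only [Matrix.mul_assoc]
      _ = 1 := by rw [hDD', Matrix.mul_one, hGinv']
  have hHu : IsUnit Hbar.det := isUnit_det_of_right_inverse hHY
  have hHHu : IsUnit Hbarᴴ.det :=
    isUnit_det_of_right_inverse (B := Yᴴ) (by
      rw [← conjTranspose_mul, hYH, conjTranspose_one])
  have hHinv : Hbar⁻¹ = Y := inv_eq_right_inv hHY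
  have hFBB2 : FBB = Y * Λ := by
    rw [hFBB, Matrix.mul_inv_rev, ← Matrix.mul_assoc,
      mul_nonsing_inv Hbarᴴ hHHu, Matrix.one_mul, hHinv]
  -- closed form for the product
  set E : Matrix (Fin N) (Fin N) ℂ := Dinv * Λ with hE
  have hFF : F * FBB = c⁻¹ • (F * (G⁻¹ * E)) := by
    rw [hFBB2, hY, Matrix.smul_mul, Matrix.mul_smul, hE, Matrix.mul_assoc]
  have hS : ∀ k, ((F * FBB)ᴴ * (F * FBB)) k k = 1 := by
    intro k
    have hSclosed : (F * FBB)ᴴ * (F * FBB) = (τ : ℂ)⁻¹ • (Eᴴ * (G⁻¹ * E)) := by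
      rw [hFF, conjTranspose_smul, Matrix.smul_mul, Matrix.mul_smul, smul_smul]
      congr 1
      · rw [← hcc]
        simp [hc, ← Complex.ofReal_inv, mul_inv]
      · simp only [conjTranspose_mul, hGiH, ← Matrix.mul_assoc]
        rw [Matrix.mul_assoc (Eᴴ * G⁻¹) Fᴴ F, ← hGdef,
          Matrix.mul_assoc Eᴴ G⁻¹ G, hGinv', Matrix.mul_one]
    have hEdiag : E = Matrix.diagonal (fun k => (β k)⁻¹ *
        ((Real.sqrt (τ * ‖β k‖ ^ 2 / ((G⁻¹) k k).re) : ℝ) : ℂ)) := by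
      rw [hE, hDinv, hΛ, diagonal_mul_diagonal]
    -- positivity of the diagonal entry of G⁻¹
    have hGi : (G⁻¹).PosDef := hG.inv
    have h0 : (0 : ℂ) < (G⁻¹) k k := by
      have hv : (Pi.single k 1 : Fin N → ℂ) ≠ 0 := by
        intro h
        have := congrFun h k
        simp at this
      exact hGi.diag_pos
    have hgre : 0 < ((G⁻¹) k k).re := by
      rw [Complex.lt_def] at h0
      simpa using h0.1
    have hGkk : (G⁻¹) k k = (((G⁻¹) k k).re : ℂ) := by
      rw [Complex.lt_def] at h0
      exact (Complex.ext rfl (by simpa using h0.2.symm))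
    set g : ℝ := ((G⁻¹) k k).re with hg
    set a : ℝ := ‖β k‖ with ha
    have hapos : 0 < a := by
      rw [ha]
      exact (norm_pos_iff.mpr (hβ k))
    have hlsq : ((Real.sqrt (τ * a ^ 2 / g) : ℝ) : ℂ) *
        ((Real.sqrt (τ * a ^ 2 / g) : ℝ) : ℂ) = ((τ * a ^ 2 / g : ℝ) : ℂ) := by
      rw [← Complex.ofReal_mul, Real.mul_self_sqrt]
      positivity
    have hbb : star (β k) * β k = ((a ^ 2 : ℝ) : ℂ) := by
      rw [ha, mul_comm, show star (β k) = (starRingEnd ℂ) (β k) from rfl,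
        Complex.mul_conj, Complex.normSq_eq_norm_sq]
    rw [hSclosed, Matrix.smul_apply, hEdiag, diagonal_conjTranspose]
    rw [Matrix.diagonal_mul, Matrix.mul_diagonal]
    simp only [Pi.star_apply, star_mul', star_inv₀, Complex.star_def,
      Complex.conj_ofReal, smul_eq_mul, ← ha, ← hg, hGkk]
    have hgne : (g : ℂ) ≠ 0 := by
      simpa using hgre.ne'
    have hane : ((a ^ 2 : ℝ) : ℂ) ≠ 0 := by
      simpa using (pow_ne_zero 2 hapos.ne')
    have hτne : ((τ : ℝ) : ℂ) ≠ 0 := by simpa using hτ.ne'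
    have hbne : (starRingEnd ℂ) (β k) ≠ 0 := by
      simpa using hβ k
    have h1 : ((Real.sqrt τ : ℝ) : ℂ) * ((Real.sqrt τ : ℝ) : ℂ) = ((τ : ℝ) : ℂ) := hcc
    have h2 : ((Real.sqrt g : ℝ) : ℂ) * ((Real.sqrt g : ℝ) : ℂ) = ((g : ℝ) : ℂ) := by
      rw [← Complex.ofReal_mul, Real.mul_self_sqrt hgre.le]
    have hbb2 : (starRingEnd ℂ) (β k) * β k = ((a : ℝ) : ℂ) * ((a : ℝ) : ℂ) := by
      rw [show ((starRingEnd ℂ) (β k)) = star (β k) from rfl, hbb]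
      push_cast
      ring
    have hane' : ((a : ℝ) : ℂ) ≠ 0 := by exact_mod_cast hapos.ne'
    rw [Complex.ofReal_re]
    rw [show ((τ : ℝ) : ℂ)⁻¹ * (((starRingEnd ℂ) (β k))⁻¹ * ((Real.sqrt (τ * a ^ 2 / g) : ℝ) : ℂ) *
        (((g : ℝ) : ℂ) * ((β k)⁻¹ * ((Real.sqrt (τ * a ^ 2 / g) : ℝ) : ℂ))))
        = ((τ : ℝ) : ℂ)⁻¹ * ((g : ℝ) : ℂ) * ((starRingEnd ℂ) (β k) * β k)⁻¹ *
          (((Real.sqrt (τ * a ^ 2 / g) : ℝ) : ℂ) * ((Real.sqrt (τ * a ^ 2 / g) : ℝ) : ℂ)) from by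
        ring, hlsq, hbb2]
    push_cast
    field_simp
  have key : ∀ k : Fin N, ∑ t, ‖(F * FBB) t k‖ ^ 2 = 1 := by
    intro k
    have h1 : ((∑ t, ‖(F * FBB) t k‖ ^ 2 : ℝ) : ℂ)
        = ((F * FBB)ᴴ * (F * FBB)) k k := by
      rw [Matrix.mul_apply]
      push_cast
      refine Finset.sum_congr rfl fun t _ => ?_
      rw [conjTranspose_apply,
        show star ((F * FBB) t k) = (starRingEnd ℂ) ((F * FBB) t k) from rfl,
        mul_comm ((starRingEnd ℂ) ((F * FBB) t k)), Complex.mul_conj,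
        Complex.normSq_eq_norm_sq]
      push_cast
      ring
    have := h1.trans (hS k)
    exact_mod_cast this
  refine ⟨key, ?_⟩
  rw [Finset.sum_comm]
  simp [key]
end
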